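/- Let x̄ ∈ K ∩ ℤⁿ with x̄ ≠ 0. Then Q(x̄) = {x ∈ ℝⁿ : x_i ≥ 0 for i = 1,…,n, and ∑_{i=1}^k d^k_i x_i ≥ ∑_{i=1}^k d^k_i x̄_i for k = 1,…,n}; that is, the n lex-cuts associated with x̄ together with the nonnegativity inequalities describe the polyhedron Q(x̄). -/

import Mathlib

/-- Lexicographic strict order on `Fin n → ℝ` associated with the standard basis. -/
def lexLt {n : ℕ} (x y : Fin n → ℝ) : Prop :=
  ∃ i : Fin n, x i < y i ∧ ∀ j : Fin n, j < i → x j = y j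

/-- `x ⪯ y` iff `x ≺ y` or `x = y`. -/
def lexLe {n : ℕ} (x y : Fin n → ℝ) : Prop := lexLt x y ∨ x = y

/-- Membership in the cone `K = ℝⁿ₊`. -/
def inK {n : ℕ} (x : Fin n → ℝ) : Prop := ∀ i, 0 ≤ x i

/-- `x` is an integer point. -/
def isInt {n : ℕ} (x : Fin n → ℝ) : Prop := ∀ i, ∃ z : ℤ, x i = (z : ℝ)

/-- `Q(x̄) = conv {x ∈ K ∩ ℤⁿ : x ⪰ x̄}`. -/
def Q {n : ℕ} (xb : Fin n → ℝ) : Set (Fin n → ℝ) :=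
  convexHull ℝ {x | inK x ∧ isInt x ∧ lexLe xb x}

/-- The coefficients `d^k_i` of the `k`-th lex-cut associated with `x̄`. -/
noncomputable def dcoef {n : ℕ} (xb : Fin n → ℝ) (k i : Fin n) : ℝ :=
  if i = k then 1 else xb k * ∏ j ∈ Finset.Ioo i k, (xb j + 1)

/-! ### Auxiliary algebraic identities -/

lemma sum_prod_filter {n : ℕ} (a : Fin n → ℝ) (s : Finset (Fin n)) :
    ∑ i ∈ s, a i * ∏ j ∈ s.filter (fun j => i < j), (a j + 1)
      = ∏ j ∈ s, (a j + 1) - 1 := by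
  induction s using Finset.induction_on_min with
  | empty => simp
  | insert t s' hmin ih =>
      have ht : t ∉ s' := fun h => lt_irrefl t (hmin t h)
      rw [Finset.sum_insert ht, Finset.prod_insert ht]
      have h1 : (insert t s').filter (fun j => t < j) = s' := by
        ext j
        simp only [Finset.mem_filter, Finset.mem_insert]
        constructor
        · rintro ⟨h | h, hlt⟩
          · exact absurd (h ▸ hlt) (lt_irrefl t)
          · exact h
        · exact fun h => ⟨Or.inr h, hmin j h⟩
      have h2 : ∀ i ∈ s', (insert t s').filter (fun j => i < j) = s'.filter (fun j => i < j) := by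
        intro i hi
        ext j
        simp only [Finset.mem_filter, Finset.mem_insert]
        constructor
        · rintro ⟨h | h, hlt⟩
          · exact absurd (h ▸ hlt) (not_lt_of_gt (hmin i hi))
          · exact ⟨h, hlt⟩
        · exact fun ⟨h, hlt⟩ => ⟨Or.inr h, hlt⟩
      rw [h1, Finset.sum_congr rfl (fun i hi => by rw [h2 i hi]), ih]
      ring

lemma sum_Iic_dcoef {n : ℕ} (a : Fin n → ℝ) (k : Fin n) :
    ∑ i ∈ Finset.Iic k, dcoef a k i * a i = a k * ∏ j ∈ Finset.Iio k, (a j + 1) := by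
  rw [← Finset.Iio_insert, Finset.sum_insert (by simp)]
  have hfil : ∀ i ∈ Finset.Iio k, Finset.Ioo i k = (Finset.Iio k).filter (fun j => i < j) := by
    intro i hi
    ext j
    simp only [Finset.mem_Ioo, Finset.mem_filter, Finset.mem_Iio]
    tauto
  have : ∀ i ∈ Finset.Iio k, dcoef a k i * a i
      = a k * (a i * ∏ j ∈ (Finset.Iio k).filter (fun j => i < j), (a j + 1)) := by
    intro i hi
    rw [dcoef, if_neg (ne_of_lt (Finset.mem_Iio.mp hi)), ← hfil i hi]
    ring
  rw [Finset.sum_congr rfl this, ← Finset.mul_sum, sum_prod_filter, dcoef, if_pos rfl]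
  ring

lemma sum_Ioc_dcoef {n : ℕ} (a : Fin n → ℝ) {t k : Fin n} (htk : t < k) :
    ∑ i ∈ Finset.Ioc t k, dcoef a k i * a i = dcoef a k t := by
  rw [← Finset.Ioo_insert_right htk, Finset.sum_insert (by simp)]
  have hfil : ∀ i ∈ Finset.Ioo t k, Finset.Ioo i k = (Finset.Ioo t k).filter (fun j => i < j) := by
    intro i hi
    simp only [Finset.mem_Ioo] at hi
    ext j
    simp only [Finset.mem_Ioo, Finset.mem_filter]
    constructor
    · exact fun ⟨h1, h2⟩ => ⟨⟨lt_trans hi.1 h1, h2⟩, h1⟩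
    · exact fun ⟨⟨_, h2⟩, h3⟩ => ⟨h3, h2⟩
  have : ∀ i ∈ Finset.Ioo t k, dcoef a k i * a i
      = a k * (a i * ∏ j ∈ (Finset.Ioo t k).filter (fun j => i < j), (a j + 1)) := by
    intro i hi
    rw [dcoef, if_neg (ne_of_lt (Finset.mem_Ioo.mp hi).2), ← hfil i hi]
    ring
  rw [Finset.sum_congr rfl this, ← Finset.mul_sum, sum_prod_filter, dcoef, if_pos rfl,
    dcoef, if_neg (ne_of_lt htk)]
  ring

lemma dcoef_nonneg {n : ℕ} {a : Fin n → ℝ} (hK : ∀ i, 0 ≤ a i) (k i : Fin n) :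
    0 ≤ dcoef a k i := by
  rw [dcoef]
  split
  · exact zero_le_one
  · exact mul_nonneg (hK k) (Finset.prod_nonneg (fun j _ => by linarith [hK j]))

/-! ### Index shifting lemmas -/

lemma Ioo_succ_succ {m : ℕ} (i k : Fin m) :
    Finset.Ioo i.succ k.succ = (Finset.Ioo i k).image Fin.succ := by
  ext j
  simp only [Finset.mem_Ioo, Finset.mem_image]
  constructor
  · intro ⟨h1, h2⟩
    rcases Fin.eq_zero_or_eq_succ j with rfl | ⟨j', rfl⟩
    · exact absurd h1 (by simp)
    · exact ⟨j', ⟨Fin.succ_lt_succ_iff.mp h1, Fin.succ_lt_succ_iff.mp h2⟩, rfl⟩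
  · rintro ⟨j', ⟨h1, h2⟩, rfl⟩
    exact ⟨Fin.succ_lt_succ_iff.mpr h1, Fin.succ_lt_succ_iff.mpr h2⟩

lemma Ioo_zero_succ {m : ℕ} (k : Fin m) :
    Finset.Ioo (0 : Fin (m+1)) k.succ = (Finset.Iio k).image Fin.succ := by
  ext j
  simp only [Finset.mem_Ioo, Finset.mem_image, Finset.mem_Iio]
  constructor
  · intro ⟨h1, h2⟩
    rcases Fin.eq_zero_or_eq_succ j with rfl | ⟨j', rfl⟩
    · exact absurd h1 (lt_irrefl 0)
    · exact ⟨j', Fin.succ_lt_succ_iff.mp h2, rfl⟩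
  · rintro ⟨j', h1, rfl⟩
    exact ⟨Fin.succ_pos j', Fin.succ_lt_succ_iff.mpr h1⟩

lemma Iic_succ_eq {m : ℕ} (k : Fin m) :
    Finset.Iic k.succ = insert (0 : Fin (m+1)) ((Finset.Iic k).image Fin.succ) := by
  ext j
  simp only [Finset.mem_Iic, Finset.mem_insert, Finset.mem_image]
  constructor
  · intro h
    rcases Fin.eq_zero_or_eq_succ j with rfl | ⟨j', rfl⟩
    · exact Or.inl rfl
    · exact Or.inr ⟨j', Fin.succ_le_succ_iff.mp h, rfl⟩
  · rintro (rfl | ⟨j', h1, rfl⟩)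
    · exact Fin.zero_le _
    · exact Fin.succ_le_succ_iff.mpr h1

lemma sum_Iic_succ {m : ℕ} (k : Fin m) (f : Fin (m+1) → ℝ) :
    ∑ i ∈ Finset.Iic k.succ, f i = f 0 + ∑ i ∈ Finset.Iic k, f i.succ := by
  rw [Iic_succ_eq, Finset.sum_insert (by simp [Finset.mem_image]),
    Finset.sum_image (fun a _ b _ h => Fin.succ_injective _ h)]

lemma dcoef_succ {m : ℕ} (a : Fin (m+1) → ℝ) (k i : Fin m) :
    dcoef (fun j => a j.succ) k i = dcoef a k.succ i.succ := by
  rw [dcoef, dcoef, Ioo_succ_succ,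
    Finset.prod_image (fun x _ y _ h => Fin.succ_injective _ h)]
  by_cases h : i = k
  · simp [h]
  · rw [if_neg h, if_neg (fun hs => h (Fin.succ_injective _ hs))]

lemma dcoef_zero_succ {m : ℕ} (a : Fin (m+1) → ℝ) (k : Fin m) :
    dcoef a k.succ 0 = a k.succ * ∏ j ∈ Finset.Iio k, (a j.succ + 1) := by
  rw [dcoef, if_neg (Fin.succ_ne_zero k).symm, Ioo_zero_succ,
    Finset.prod_image (fun x _ y _ h => Fin.succ_injective _ h)]

/-! ### Convex hull machinery -/

def Sset {n : ℕ} (xb : Fin n → ℝ) : Set (Fin n → ℝ) := {x | inK x ∧ isInt x ∧ lexLe xb x}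

lemma Q_eq {n : ℕ} (xb : Fin n → ℝ) : Q xb = convexHull ℝ (Sset xb) := rfl

/-- Non-dependent cons. -/
def consR {m : ℕ} (b : ℝ) (w : Fin m → ℝ) : Fin (m+1) → ℝ := Fin.cons b w

@[simp] lemma consR_zero {m : ℕ} (b : ℝ) (w : Fin m → ℝ) : consR b w 0 = b := rfl
@[simp] lemma consR_succ {m : ℕ} (b : ℝ) (w : Fin m → ℝ) (i : Fin m) :
    consR b w i.succ = w i := by simp [consR]

lemma cons_mem_convexHull {m : ℕ} (b : ℝ) {S : Set (Fin (m+1) → ℝ)} {S' : Set (Fin m → ℝ)}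
    (h : ∀ w ∈ S', consR b w ∈ S) {y : Fin m → ℝ}
    (hy : y ∈ convexHull ℝ S') : consR b y ∈ convexHull ℝ S := by
  have hconv : Convex ℝ {y : Fin m → ℝ | consR b y ∈ convexHull ℝ S} := by
    intro u hu v hv α β hα hβ hαβ
    have key : consR b (α • u + β • v) = α • consR b u + β • consR b v := by
      funext i
      rcases Fin.eq_zero_or_eq_succ i with rfl | ⟨i', rfl⟩
      · simp only [consR_zero, Pi.add_apply, Pi.smul_apply, smul_eq_mul]
        rw [← add_mul, hαβ, one_mul]
      · simp [consR_succ]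
    show consR b (α • u + β • v) ∈ convexHull ℝ S
    rw [key]
    exact (convex_convexHull ℝ S) hu hv hα hβ hαβ
  have hsub : S' ⊆ {y : Fin m → ℝ | consR b y ∈ convexHull ℝ S} :=
    fun w hw => subset_convexHull ℝ S (h w hw)
  exact convexHull_min hsub hconv hy

lemma step_combine {m : ℕ} {xb x : Fin (m+1) → ℝ} {b : ℝ} {xb' : Fin m → ℝ}
    (hb1 : b ≤ x 0) (hb2 : x 0 < b + 1)
    (hcons : ∀ w ∈ Sset xb', consR b w ∈ Sset xb)
    (hv : consR (b+1) (fun _ => (0:ℝ)) ∈ Sset xb)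
    (hy : (fun i => (1 - (x 0 - b))⁻¹ * x i.succ) ∈ Q xb') :
    x ∈ Q xb := by
  set lam := x 0 - b with hlamdef
  have hlam0 : 0 ≤ lam := by simp [hlamdef]; linarith
  have h1lam : 0 < 1 - lam := by simp [hlamdef]; linarith
  rw [Q_eq] at hy ⊢
  have hu : consR b (fun i => (1 - lam)⁻¹ * x i.succ) ∈ convexHull ℝ (Sset xb) :=
    cons_mem_convexHull b hcons hy
  have hvh : consR (b+1) (fun _ => (0:ℝ)) ∈ convexHull ℝ (Sset xb) :=
    subset_convexHull ℝ _ hv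
  have key : x = (1 - lam) • consR b (fun i => (1 - lam)⁻¹ * x i.succ)
      + lam • consR (b+1) (fun _ => (0:ℝ)) := by
    funext i
    rcases Fin.eq_zero_or_eq_succ i with rfl | ⟨i', rfl⟩
    · simp only [Pi.add_apply, Pi.smul_apply, consR_zero, smul_eq_mul, hlamdef]
      ring
    · simp only [Pi.add_apply, Pi.smul_apply, consR_succ, smul_eq_mul]
      rw [mul_zero, add_zero, ← mul_assoc, mul_inv_cancel₀ h1lam.ne', one_mul]
  rw [key]
  exact (convex_convexHull ℝ (Sset xb)) hu hvh (le_of_lt h1lam) hlam0 (by ring)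

/-! ### Easy direction -/

lemma S_subset_target {n : ℕ} (xb : Fin n → ℝ) (hK : inK xb) (hI : isInt xb) :
    Sset xb ⊆ {x : Fin n → ℝ | (∀ i, 0 ≤ x i) ∧ ∀ k : Fin n,
      ∑ i ∈ Finset.Iic k, dcoef xb k i * x i ≥ ∑ i ∈ Finset.Iic k, dcoef xb k i * xb i} := by
  rintro x ⟨hxK, hxI, hlex⟩
  refine ⟨hxK, ?_⟩
  intro k
  rcases hlex with hlt | rfl
  swap
  · exact le_refl _
  obtain ⟨t, hlt, hag⟩ := hlt
  have hxt : xb t + 1 ≤ x t := by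
    obtain ⟨z1, hz1⟩ := hI t
    obtain ⟨z2, hz2⟩ := hxI t
    rw [hz1, hz2] at hlt ⊢
    have h1 : z1 < z2 := by exact_mod_cast hlt
    have h2 : z1 + 1 ≤ z2 := h1
    exact_mod_cast h2
  by_cases hkt : k < t
  · refine ge_of_eq (Finset.sum_congr rfl fun i hi => ?_)
    rw [hag i (lt_of_le_of_lt (Finset.mem_Iic.mp hi) hkt)]
  · push_neg at hkt
    rcases eq_or_lt_of_le hkt with rfl | htk
    · -- t = k
      apply Finset.sum_le_sum
      intro i hi
      rcases lt_or_eq_of_le (Finset.mem_Iic.mp hi) with h | rfl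
      · rw [hag i h]
      · exact mul_le_mul_of_nonneg_left (by linarith) (dcoef_nonneg hK i i)
    · -- t < k
      have hsplit : Finset.Iic k = Finset.Iio t ∪ Finset.Icc t k := by
        ext i
        simp only [Finset.mem_Iic, Finset.mem_union, Finset.mem_Iio, Finset.mem_Icc]
        constructor
        · intro h
          rcases lt_or_ge i t with h' | h'
          · exact Or.inl h'
          · exact Or.inr ⟨h', h⟩
        · rintro (h | ⟨h1, h2⟩)
          · exact le_trans h.le htk.le
          · exact h2
      have hdisj : Disjoint (Finset.Iio t) (Finset.Icc t k) := by
        rw [Finset.disjoint_left]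
        intro i hi hi2
        exact absurd (Finset.mem_Icc.mp hi2).1 (not_le_of_gt (Finset.mem_Iio.mp hi))
      have hIcc : Finset.Icc t k = insert t (Finset.Ioc t k) :=
        (Finset.Ioc_insert_left htk.le).symm
      rw [hsplit, Finset.sum_union hdisj, Finset.sum_union hdisj, hIcc,
        Finset.sum_insert (by simp), Finset.sum_insert (by simp)]
      have hIio : ∑ i ∈ Finset.Iio t, dcoef xb k i * x i
          = ∑ i ∈ Finset.Iio t, dcoef xb k i * xb i :=
        (Finset.sum_congr rfl fun i hi => by rw [hag i (Finset.mem_Iio.mp hi)]).symm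
      have hIoc_g : ∑ i ∈ Finset.Ioc t k, dcoef xb k i * xb i = dcoef xb k t :=
        sum_Ioc_dcoef xb htk
      have hIoc_f : 0 ≤ ∑ i ∈ Finset.Ioc t k, dcoef xb k i * x i :=
        Finset.sum_nonneg fun i _ => mul_nonneg (dcoef_nonneg hK k i) (hxK i)
      have hft := mul_le_mul_of_nonneg_left hxt (dcoef_nonneg hK k t)
      rw [mul_add, mul_one] at hft
      linarith

lemma target_convex {n : ℕ} (xb : Fin n → ℝ) :
    Convex ℝ {x : Fin n → ℝ | (∀ i, 0 ≤ x i) ∧ ∀ k : Fin n,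
      ∑ i ∈ Finset.Iic k, dcoef xb k i * x i ≥ ∑ i ∈ Finset.Iic k, dcoef xb k i * xb i} := by
  intro u hu v hv α β hα hβ hαβ
  constructor
  · intro i
    simp only [Pi.add_apply, Pi.smul_apply, smul_eq_mul]
    exact add_nonneg (mul_nonneg hα (hu.1 i)) (mul_nonneg hβ (hv.1 i))
  · intro k
    have h1 := hu.2 k
    have h2 := hv.2 k
    have expand : ∑ i ∈ Finset.Iic k, dcoef xb k i * (α • u + β • v) i
        = α * ∑ i ∈ Finset.Iic k, dcoef xb k i * u i
          + β * ∑ i ∈ Finset.Iic k, dcoef xb k i * v i := by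
      rw [Finset.mul_sum, Finset.mul_sum, ← Finset.sum_add_distrib]
      refine Finset.sum_congr rfl fun i _ => ?_
      simp only [Pi.add_apply, Pi.smul_apply, smul_eq_mul]
      ring
    show ∑ i ∈ Finset.Iic k, dcoef xb k i * (α • u + β • v) i ≥ _
    rw [expand]
    have ha := mul_le_mul_of_nonneg_left h1 hα
    have hb := mul_le_mul_of_nonneg_left h2 hβ
    have hsum : α * (∑ i ∈ Finset.Iic k, dcoef xb k i * xb i)
        + β * (∑ i ∈ Finset.Iic k, dcoef xb k i * xb i)
        = ∑ i ∈ Finset.Iic k, dcoef xb k i * xb i := by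
      rw [← add_mul, hαβ, one_mul]
    linarith

/-! ### Hard direction -/

lemma hard_direction : ∀ (m : ℕ) (xb : Fin m → ℝ), inK xb → isInt xb →
    ∀ x : Fin m → ℝ, (∀ i, 0 ≤ x i) →
    (∀ k, ∑ i ∈ Finset.Iic k, dcoef xb k i * x i ≥ ∑ i ∈ Finset.Iic k, dcoef xb k i * xb i) →
    x ∈ Q xb := by
  intro m
  induction m with
  | zero =>
    intro xb _ _ x _ _
    rw [Q_eq]
    exact subset_convexHull ℝ _
      ⟨fun i => i.elim0, fun i => i.elim0, Or.inr (Subsingleton.elim _ _)⟩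
  | succ m ih =>
    intro xb hK hI x hx hcut
    have hIic0 : Finset.Iic (0 : Fin (m+1)) = {0} := by
      ext i; simp [Fin.le_zero_iff]
    have h0 : xb 0 ≤ x 0 := by
      have := hcut 0
      simp [hIic0, dcoef] at this
      linarith
    by_cases hcase : x 0 < xb 0 + 1
    · -- Case A : xb 0 ≤ x 0 < xb 0 + 1
      have h1lam : 0 < 1 - (x 0 - xb 0) := by linarith
      refine step_combine (xb' := fun j => xb j.succ) h0 hcase ?_ ?_ ?_
      · -- hcons
        rintro w ⟨hwK, hwI, hwlex⟩
        refine ⟨?_, ?_, ?_⟩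
        · intro i
          rcases Fin.eq_zero_or_eq_succ i with rfl | ⟨i', rfl⟩
          · exact hK 0
          · rw [consR_succ]; exact hwK i'
        · intro i
          rcases Fin.eq_zero_or_eq_succ i with rfl | ⟨i', rfl⟩
          · exact hI 0
          · rw [consR_succ]; exact hwI i'
        · rcases hwlex with hlt | heq
          · obtain ⟨i', h1, h2⟩ := hlt
            refine Or.inl ⟨i'.succ, by simpa using h1, ?_⟩
            intro j hj
            rcases Fin.eq_zero_or_eq_succ j with rfl | ⟨j', rfl⟩
            · rfl
            · rw [consR_succ]
              exact h2 j' (Fin.succ_lt_succ_iff.mp hj)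
          · refine Or.inr ?_
            funext i
            rcases Fin.eq_zero_or_eq_succ i with rfl | ⟨i', rfl⟩
            · rfl
            · rw [consR_succ, ← congrFun heq i']
      · -- hv
        refine ⟨?_, ?_, Or.inl ⟨0, by rw [consR_zero]; linarith, fun j hj => absurd hj (by simp)⟩⟩
        · intro i
          rcases Fin.eq_zero_or_eq_succ i with rfl | ⟨i', rfl⟩
          · rw [consR_zero]; linarith [hK 0]
          · simp
        · intro i
          rcases Fin.eq_zero_or_eq_succ i with rfl | ⟨i', rfl⟩
          · obtain ⟨z, hz⟩ := hI 0
            exact ⟨z + 1, by rw [consR_zero, hz]; push_cast; ring⟩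
          · exact ⟨0, by simp⟩
      · -- hy : the rescaled tail is in Q (tail xb)
        apply ih (fun j => xb j.succ) (fun i => hK i.succ) (fun i => hI i.succ)
        · intro i
          exact mul_nonneg (inv_nonneg.mpr h1lam.le) (hx i.succ)
        · intro k
          have hRHSx : ∑ i ∈ Finset.Iic k, dcoef (fun j => xb j.succ) k i * xb i.succ
              = dcoef xb k.succ 0 :=
            (sum_Iic_dcoef (fun j => xb j.succ) k).trans (dcoef_zero_succ xb k).symm
          have hshiftx : ∑ i ∈ Finset.Iic k, dcoef xb k.succ i.succ * x i.succ
              = ∑ i ∈ Finset.Iic k, dcoef (fun j => xb j.succ) k i * x i.succ :=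
            Finset.sum_congr rfl fun i _ => by rw [dcoef_succ]
          have hshiftxb : ∑ i ∈ Finset.Iic k, dcoef xb k.succ i.succ * xb i.succ
              = ∑ i ∈ Finset.Iic k, dcoef (fun j => xb j.succ) k i * xb i.succ :=
            Finset.sum_congr rfl fun i _ => by rw [dcoef_succ]
          have hkey := hcut k.succ
          rw [sum_Iic_succ k (fun i => dcoef xb k.succ i * x i),
            sum_Iic_succ k (fun i => dcoef xb k.succ i * xb i)] at hkey
          rw [hshiftx, hshiftxb, hRHSx] at hkey
          -- hkey : d0 * x 0 + Sx ≥ d0 * xb 0 + d0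
          have hSx : ∑ i ∈ Finset.Iic k, dcoef (fun j => xb j.succ) k i * x i.succ
              ≥ dcoef xb k.succ 0 * (1 - (x 0 - xb 0)) := by nlinarith [hkey]
          have hgoal_lhs : ∑ i ∈ Finset.Iic k, dcoef (fun j => xb j.succ) k i
                * ((1 - (x 0 - xb 0))⁻¹ * x i.succ)
              = (1 - (x 0 - xb 0))⁻¹
                * ∑ i ∈ Finset.Iic k, dcoef (fun j => xb j.succ) k i * x i.succ := by
            rw [Finset.mul_sum]
            exact Finset.sum_congr rfl fun i _ => by ring
          rw [ge_iff_le, hRHSx, hgoal_lhs]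
          have hmul := mul_le_mul_of_nonneg_left hSx (inv_nonneg.mpr h1lam.le)
          have heq : (1 - (x 0 - xb 0))⁻¹ * (dcoef xb k.succ 0 * (1 - (x 0 - xb 0)))
              = dcoef xb k.succ 0 := by
            field_simp
          linarith [hmul, heq.ge]
    · -- Case B : x 0 ≥ xb 0 + 1
      push_neg at hcase
      have hb1 : ((⌊x 0⌋ : ℤ) : ℝ) ≤ x 0 := Int.floor_le _
      have hb2 : x 0 < ((⌊x 0⌋ : ℤ) : ℝ) + 1 := Int.lt_floor_add_one _
      have hab : xb 0 + 1 ≤ ((⌊x 0⌋ : ℤ) : ℝ) := by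
        obtain ⟨z, hz⟩ := hI 0
        have h1 : (z + 1 : ℤ) ≤ ⌊x 0⌋ := Int.le_floor.mpr (by push_cast; rw [← hz]; exact hcase)
        rw [hz]
        exact_mod_cast h1
      refine step_combine (xb' := fun _ => (0:ℝ)) hb1 hb2 ?_ ?_ ?_
      · -- hcons
        rintro w ⟨hwK, hwI, _⟩
        refine ⟨?_, ?_, Or.inl ⟨0, by rw [consR_zero]; linarith [hab, hK 0],
          fun j hj => absurd hj (by simp)⟩⟩
        · intro i
          rcases Fin.eq_zero_or_eq_succ i with rfl | ⟨i', rfl⟩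
          · rw [consR_zero]; linarith [hK 0, hab]
          · rw [consR_succ]; exact hwK i'
        · intro i
          rcases Fin.eq_zero_or_eq_succ i with rfl | ⟨i', rfl⟩
          · exact ⟨⌊x 0⌋, rfl⟩
          · rw [consR_succ]; exact hwI i'
      · -- hv
        refine ⟨?_, ?_, Or.inl ⟨0, by rw [consR_zero]; linarith [hab, hK 0],
          fun j hj => absurd hj (by simp)⟩⟩
        · intro i
          rcases Fin.eq_zero_or_eq_succ i with rfl | ⟨i', rfl⟩
          · rw [consR_zero]; linarith [hK 0, hab]
          · simp
        · intro i
          rcases Fin.eq_zero_or_eq_succ i with rfl | ⟨i', rfl⟩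
          · exact ⟨⌊x 0⌋ + 1, by rw [consR_zero]; push_cast; ring⟩
          · exact ⟨0, by simp⟩
      · -- hy
        apply ih (fun _ => (0:ℝ)) (fun _ => le_refl 0) (fun _ => ⟨0, by simp⟩)
        · intro i
          exact mul_nonneg (inv_nonneg.mpr (by linarith)) (hx i.succ)
        · intro k
          have hRHS0 : ∑ i ∈ Finset.Iic k, dcoef (fun _ => (0:ℝ)) k i * (0:ℝ) = 0 := by
            simp
          rw [ge_iff_le, hRHS0]
          exact Finset.sum_nonneg fun i _ =>
            mul_nonneg (dcoef_nonneg (fun _ => le_refl 0) k i)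
              (mul_nonneg (inv_nonneg.mpr (by linarith)) (hx i.succ))

/-! ### Main theorem -/

theorem stmt6 {n : ℕ} (xb : Fin n → ℝ) (hK : inK xb) (hI : isInt xb) (hx0 : xb ≠ 0) :
    Q xb = {x : Fin n → ℝ | (∀ i, 0 ≤ x i) ∧ ∀ k : Fin n,
      ∑ i ∈ Finset.Iic k, dcoef xb k i * x i ≥ ∑ i ∈ Finset.Iic k, dcoef xb k i * xb i} := by
  apply Set.Subset.antisymm
  · rw [Q_eq]
    exact convexHull_min (S_subset_target xb hK hI) (target_convex xb)
  · intro x hx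
    exact hard_direction n xb hK hI x hx.1 hx.2
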